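/- With γ_m satisfying 2νh_mγ_m - γ_{m+1} - γ_{m-1} = 0 (γ_0 = 1, γ_1(ν) = (1-ϖ)ν, h_m = 1-ϖβ_m, β_m = 0 for m > L) and P_m satisfying 2zP_m - P_{m+1} - P_{m-1} = 2δ_{m0}, the Christoffel–Darboux-type identity Λ(z) = P_{m_B}(z)γ_{m_B+1}(z) - P_{m_B+1}(z)γ_{m_B}(z) holds for every integer m_B ≥ L, where Λ(z) = 1 - ϖz[P_0(z) + 2Σ_{m=1}^{L} β_m γ_m(z) P_m(z)]. -/

import Mathlib

theorem christoffel_darboux_Lambda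
    (ϖ : ℝ) (hϖ : ϖ ∈ Set.Ioo (0:ℝ) 1) (L : ℕ)
    (β : ℕ → ℝ) (hβ0 : β 0 = 1) (hβL : ∀ m : ℕ, L < m → β m = 0)
    (h : ℕ → ℝ) (hh : ∀ m, h m = 1 - ϖ * β m)
    (z : ℂ) (γ P : ℕ → ℂ)
    (hγ0 : γ 0 = 1) (hγ1 : γ 1 = (1 - ϖ : ℂ) * z)
    (hγrec : ∀ m : ℕ, 1 ≤ m → 2 * z * (h m : ℂ) * γ m - γ (m + 1) - γ (m - 1) = 0)
    (hPrec : ∀ m : ℕ, 1 ≤ m → 2 * z * P m - P (m + 1) - P (m - 1) = 0)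
    (hP1 : P 1 = z * P 0 - 1)
    (Λ : ℂ)
    (hΛ : Λ = 1 - (ϖ : ℂ) * z *
      (P 0 + 2 * ∑ m ∈ Finset.Icc 1 L, (β m : ℂ) * γ m * P m)) :
    ∀ mB : ℕ, L ≤ mB → Λ = P mB * γ (mB + 1) - P (mB + 1) * γ mB := by
  have key : ∀ m : ℕ, P m * γ (m + 1) - P (m + 1) * γ m
      = 1 - (ϖ : ℂ) * z * (P 0 + 2 * ∑ k ∈ Finset.Icc 1 m, (β k : ℂ) * γ k * P k) := by
    intro m
    induction m with
    | zero =>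
      simp [hγ0, hγ1, hP1]
      ring
    | succ n ih =>
      have hγ := hγrec (n + 1) (Nat.le_add_left 1 n)
      have hP := hPrec (n + 1) (Nat.le_add_left 1 n)
      simp only [Nat.add_sub_cancel] at hγ hP
      have hsum : ∑ k ∈ Finset.Icc 1 (n + 1), (β k : ℂ) * γ k * P k
          = (∑ k ∈ Finset.Icc 1 n, (β k : ℂ) * γ k * P k) + (β (n+1) : ℂ) * γ (n+1) * P (n+1) :=
        Finset.sum_Icc_succ_top (Nat.le_add_left 1 n) _
      have hhc : (h (n+1) : ℂ) = 1 - (ϖ : ℂ) * (β (n+1) : ℂ) := by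
        rw [hh]; push_cast; ring
      rw [hsum]
      rw [hhc] at hγ
      linear_combination ih - P (n+1) * hγ + γ (n+1) * hP
  intro mB hL
  have hsum : ∑ k ∈ Finset.Icc 1 mB, (β k : ℂ) * γ k * P k
      = ∑ k ∈ Finset.Icc 1 L, (β k : ℂ) * γ k * P k := by
    refine (Finset.sum_subset (Finset.Icc_subset_Icc_right hL) ?_).symm
    intro k hk hk'
    have : L < k := by
      simp only [Finset.mem_Icc] at hk hk'
      omega
    simp [hβL k this]
  rw [hΛ, key mB, hsum]
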